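/- Suppose inf_{t∈ℝ} {a₁(t) − κ|a₂(t)|} > 2(χ)₊, and let (ū, u̲) be a solution of the comparison ODE system (with a_i⁻ = a_i⁺ = a_i) on [t₀, ∞) with 0 < u̲(t₀) ≤ ū(t₀). Then: (i) for all t ≥ t₀, (d/dt) ln(ū(t)/u̲(t)) = −(a₁(t) − κ|a₂(t)| − 2(χ)₊)(ū(t) − u̲(t)) ≤ 0, so t ↦ ū(t)/u̲(t) is nonincreasing and ū(t)/u̲(t) ≤ ū(t₀)/u̲(t₀); (ii) if moreover m := inf_{t ≥ t₀} ū(t) > 0, then 0 ≤ ln(ū(t)/u̲(t)) ≤ e^{−ε₀(t − t₀)} ln(ū(t₀)/u̲(t₀)) for all t ≥ t₀, where ε₀ = (inf_{t∈ℝ}{a₁(t) − κ|a₂(t)| − 2(χ)₊}) · m · u̲(t₀)/ū(t₀) > 0; in particular ū(t) − u̲(t) → 0 as t → ∞. -/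

import Mathlib

/-- `f : ℝ → ℝ` is continuous and bounded. -/
def ContBdd (f : ℝ → ℝ) : Prop :=
  Continuous f ∧ BddAbove (Set.range f) ∧ BddBelow (Set.range f)

/-- `(ub, lb)` solves the comparison ODE system (with `aᵢ⁻ = aᵢ⁺ = aᵢ`)
`ū' = (χ)₊ ū(ū − u̲) + ū[a₀(t) − a₁(t)ū − κ(a₂(t))₊ u̲ + κ(a₂(t))₋ ū]`,
`u̲' = (χ)₊ u̲(u̲ − ū) + u̲[a₀(t) − a₁(t)u̲ − κ(a₂(t))₊ ū + κ(a₂(t))₋ u̲]`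
on the interval `[t₀, ∞)`. -/
def CompODESystemOn (χ κ : ℝ) (a₀ a₁ a₂ : ℝ → ℝ) (t₀ : ℝ) (ub lb : ℝ → ℝ) : Prop :=
  ∀ t ∈ Set.Ici t₀,
    HasDerivWithinAt ub
      (max χ 0 * ub t * (ub t - lb t) +
        ub t * (a₀ t - a₁ t * ub t - κ * max (a₂ t) 0 * lb t
          + κ * max (-(a₂ t)) 0 * ub t)) (Set.Ici t₀) t ∧
    HasDerivWithinAt lb
      (max χ 0 * lb t * (lb t - ub t) +
        lb t * (a₀ t - a₁ t * lb t - κ * max (a₂ t) 0 * ub t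
          + κ * max (-(a₂ t)) 0 * lb t)) (Set.Ici t₀) t


open Set Filter Real

/-- monotone helper -/
lemma mono_Icc_helper {a b : ℝ} {f f' : ℝ → ℝ}
    (hcont : ContinuousOn f (Set.Icc a b))
    (hf : ∀ t ∈ Set.Ioo a b, HasDerivAt f (f' t) t)
    (h' : ∀ t ∈ Set.Ioo a b, 0 ≤ f' t) : MonotoneOn f (Set.Icc a b) := by
  apply monotoneOn_of_hasDerivWithinAt_nonneg (f' := f') (convex_Icc a b) hcont
  · rw [interior_Icc]; exact fun x hx => (hf x hx).hasDerivWithinAt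
  · rw [interior_Icc]; exact h'

lemma anti_Icc_helper {a b : ℝ} {f f' : ℝ → ℝ}
    (hcont : ContinuousOn f (Set.Icc a b))
    (hf : ∀ t ∈ Set.Ioo a b, HasDerivAt f (f' t) t)
    (h' : ∀ t ∈ Set.Ioo a b, f' t ≤ 0) : AntitoneOn f (Set.Icc a b) := by
  apply antitoneOn_of_hasDerivWithinAt_nonpos (f' := f') (convex_Icc a b) hcont
  · rw [interior_Icc]; exact fun x hx => (hf x hx).hasDerivWithinAt
  · rw [interior_Icc]; exact h'

lemma anti_Ici_helper {t₀ : ℝ} {f f' : ℝ → ℝ}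
    (hf : ∀ t ∈ Set.Ici t₀, HasDerivWithinAt f (f' t) (Set.Ici t₀) t)
    (h' : ∀ t ∈ Set.Ioi t₀, f' t ≤ 0) : AntitoneOn f (Set.Ici t₀) := by
  apply antitoneOn_of_hasDerivWithinAt_nonpos (f' := f') (convex_Ici t₀)
    (fun t ht => (hf t ht).continuousWithinAt)
  · rw [interior_Ici]
    exact fun x hx => (((hf x (mem_Ici.2 (le_of_lt (mem_Ioi.1 hx)))).hasDerivAt (Ici_mem_nhds hx)).hasDerivWithinAt)
  · rw [interior_Ici]; exact h'

/-- sign preservation for linear-type scalar ODEs -/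
lemma nonneg_of_ode {t₀ : ℝ} {f c : ℝ → ℝ}
    (hc : ContinuousOn c (Set.Ici t₀))
    (hf : ∀ t ∈ Set.Ici t₀, HasDerivWithinAt f (c t * f t) (Set.Ici t₀) t)
    (h0 : 0 ≤ f t₀) : ∀ t ∈ Set.Ici t₀, 0 ≤ f t := by
  have hfc : ContinuousOn f (Set.Ici t₀) := fun t ht => (hf t ht).continuousWithinAt
  by_contra hcon
  push_neg at hcon
  obtain ⟨T, hT, hfT⟩ := hcon
  have hIccsub : Set.Icc t₀ T ⊆ Set.Ici t₀ := Icc_subset_Ici_self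
  obtain ⟨K, hK⟩ := (isCompact_Icc (a := t₀) (b := T)).exists_bound_of_continuousOn
    (hc.mono hIccsub)
  set S : Set ℝ := {t ∈ Set.Icc t₀ T | 0 ≤ f t} with hS
  have hSne : S.Nonempty := ⟨t₀, ⟨le_refl _, hT⟩, h0⟩
  have hSbdd : BddAbove S := ⟨T, fun x hx => hx.1.2⟩
  have hSclosed : IsClosed S := by
    have : S = Set.Icc t₀ T ∩ f ⁻¹' (Set.Ici 0) := by
      ext x; simp [hS, Set.mem_setOf_eq, Set.mem_inter_iff]
    rw [this]
    exact (hfc.mono hIccsub).preimage_isClosed_of_isClosed isClosed_Icc isClosed_Ici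
  obtain ⟨τ, hτS, hub⟩ : ∃ τ, τ ∈ S ∧ ∀ x ∈ S, x ≤ τ :=
    ⟨sSup S, hSclosed.csSup_mem hSne hSbdd, fun x hx => le_csSup hSbdd hx⟩
  have hτIcc : τ ∈ Set.Icc t₀ T := hτS.1
  have hτT : τ < T := lt_of_le_of_ne hτIcc.2 (by rintro rfl; exact absurd hτS.2 (not_le.2 hfT))
  have hneg : ∀ s ∈ Set.Ioc τ T, f s < 0 := by
    intro s hs
    by_contra h
    push_neg at h
    exact absurd (hub s ⟨⟨le_trans hτIcc.1 hs.1.le, hs.2⟩, h⟩) (not_le.2 hs.1)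
  have hfτ0 : f τ = 0 := by
    refine le_antisymm ?_ hτS.2
    have htends : Filter.Tendsto f (nhdsWithin τ (Set.Ioi τ)) (nhds (f τ)) :=
      (hfc τ (mem_Ici.2 hτIcc.1)).tendsto.mono_left
        (nhdsWithin_mono τ (fun x hx => le_trans hτIcc.1 (le_of_lt hx)))
    refine le_of_tendsto htends ?_
    filter_upwards [Ioc_mem_nhdsGT_of_mem ⟨le_refl τ, hτT⟩] with s hs
    exact (hneg s hs).le
  -- Gronwall on [τ, T]
  have hbound := norm_le_gronwallBound_of_norm_deriv_right_le (f := f)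
    (f' := fun t => c t * f t) (δ := 0) (K := K) (ε := 0) (a := τ) (b := T)
    (hfc.mono (fun x hx => le_trans hτIcc.1 hx.1))
    (fun x hx => (hf x (le_trans hτIcc.1 hx.1)).mono (Set.Ici_subset_Ici.mpr (le_trans hτIcc.1 hx.1)))
    (by simp [hfτ0])
    (fun x hx => by
      rw [norm_mul]
      simpa using mul_le_mul_of_nonneg_right
        (hK x ⟨le_trans hτIcc.1 hx.1, hx.2.le⟩) (norm_nonneg (f x)))
  have := hbound T ⟨hτT.le, le_refl T⟩
  rw [gronwallBound_ε0_δ0] at this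
  have : f T = 0 := by simpa [norm_eq_abs, abs_nonpos_iff] using this
  linarith

lemma pos_of_ode {t₀ : ℝ} {f c : ℝ → ℝ}
    (hc : ContinuousOn c (Set.Ici t₀))
    (hf : ∀ t ∈ Set.Ici t₀, HasDerivWithinAt f (c t * f t) (Set.Ici t₀) t)
    (h0 : 0 < f t₀) : ∀ t ∈ Set.Ici t₀, 0 < f t := by
  have hnn := nonneg_of_ode hc hf h0.le
  have hfc : ContinuousOn f (Set.Ici t₀) := fun t ht => (hf t ht).continuousWithinAt
  intro τ hτ
  rcases lt_or_ge 0 (f τ) with h | h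
  · exact h
  exfalso
  have hfτ : f τ = 0 := le_antisymm h (hnn τ hτ)
  have hτne : t₀ ≠ τ := by rintro rfl; linarith
  have hτgt : t₀ < τ := lt_of_le_of_ne hτ hτne
  obtain ⟨K, hK⟩ := (isCompact_Icc (a := t₀) (b := τ)).exists_bound_of_continuousOn
    (hc.mono Icc_subset_Ici_self)
  set g : ℝ → ℝ := fun t => f t * Real.exp (K * (t - t₀)) with hg
  have hmono : MonotoneOn g (Set.Icc t₀ τ) := by
    apply mono_Icc_helper (f' := fun t => (c t * f t) * Real.exp (K * (t - t₀)) +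
      f t * (K * Real.exp (K * (t - t₀))))
    · exact ((hfc.mono Icc_subset_Ici_self).mul
        (Continuous.continuousOn (by continuity)))
    · intro t ht
      have hft : HasDerivAt f (c t * f t) t :=
        (hf t (le_of_lt ht.1)).hasDerivAt (Ici_mem_nhds ht.1)
      have hexp : HasDerivAt (fun t => Real.exp (K * (t - t₀))) (K * Real.exp (K * (t - t₀))) t := by
        have := (((hasDerivAt_id t).sub_const t₀).const_mul K).exp
        simpa [mul_comm] using this
      exact hft.mul hexp
    · intro t ht
      have h1 : 0 ≤ f t := hnn t (le_of_lt ht.1)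
      have h2 : 0 < Real.exp (K * (t - t₀)) := Real.exp_pos _
      have h3 : |c t| ≤ K := by
        simpa [norm_eq_abs] using hK t ⟨ht.1.le, ht.2.le⟩
      have h4 : 0 ≤ c t + K := by
        have := neg_abs_le (c t); linarith
      have : (c t * f t) * Real.exp (K * (t - t₀)) + f t * (K * Real.exp (K * (t - t₀)))
          = (c t + K) * (f t * Real.exp (K * (t - t₀))) := by ring
      rw [this]
      positivity
  have h5 := hmono ⟨le_refl _, hτgt.le⟩ ⟨hτgt.le, le_refl _⟩ hτgt.le
  simp only [hg, hfτ, zero_mul] at h5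
  nlinarith [Real.exp_pos (K * (t₀ - t₀)), h5, h0, Real.exp_pos (K * (t₀ - t₀))]

private theorem main
    (χ κ : ℝ) (hκ : 0 < κ)
    (a₀ a₁ a₂ : ℝ → ℝ)
    (h₀c : Continuous a₀) (h₁c : Continuous a₁) (h₂c : Continuous a₂)
    (h₀a : BddAbove (Set.range a₀))
    (h₁b : BddBelow (Set.range a₁))
    (h₂a : BddAbove (Set.range a₂)) (h₂b : BddBelow (Set.range a₂))
    (hcond : 2 * max χ 0 < ⨅ t, (a₁ t - κ * |a₂ t|))
    (t₀ : ℝ) (ub lb : ℝ → ℝ)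
    (hsol : CompODESystemOn χ κ a₀ a₁ a₂ t₀ ub lb)
    (hlb₀ : 0 < lb t₀) (hord₀ : lb t₀ ≤ ub t₀)
    (m ε₀ : ℝ) (hm : m = ⨅ t : Set.Ici t₀, ub ↑t)
    (hε₀ : ε₀ = (⨅ t, (a₁ t - κ * |a₂ t| - 2 * max χ 0)) * m * (lb t₀ / ub t₀)) :
    (∀ t ∈ Set.Ici t₀,
      HasDerivWithinAt (fun s => Real.log (ub s / lb s))
        (-((a₁ t - κ * |a₂ t| - 2 * max χ 0) * (ub t - lb t))) (Set.Ici t₀) t ∧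
      -((a₁ t - κ * |a₂ t| - 2 * max χ 0) * (ub t - lb t)) ≤ 0) ∧
    AntitoneOn (fun t => ub t / lb t) (Set.Ici t₀) ∧
    (∀ t ∈ Set.Ici t₀, ub t / lb t ≤ ub t₀ / lb t₀) ∧
    (0 < m →
      0 < ε₀ ∧
      (∀ t ∈ Set.Ici t₀,
        0 ≤ Real.log (ub t / lb t) ∧
        Real.log (ub t / lb t) ≤ Real.exp (-(ε₀ * (t - t₀))) * Real.log (ub t₀ / lb t₀)) ∧
      Filter.Tendsto (fun t => ub t - lb t) Filter.atTop (nhds 0)) := by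
  have hX : (0:ℝ) ≤ max χ 0 := le_max_right _ _
  have hubc : ContinuousOn ub (Set.Ici t₀) := fun t ht => ((hsol t ht).1).continuousWithinAt
  have hlbc : ContinuousOn lb (Set.Ici t₀) := fun t ht => ((hsol t ht).2).continuousWithinAt
  -- positivity of lb
  have hlbpos : ∀ t ∈ Set.Ici t₀, 0 < lb t := by
    apply pos_of_ode (c := fun t => max χ 0 * (lb t - ub t) +
      (a₀ t - a₁ t * lb t - κ * max (a₂ t) 0 * ub t + κ * max (-(a₂ t)) 0 * lb t)) ?_ ?_ hlb₀
    · apply ContinuousOn.add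
      · exact continuousOn_const.mul (hlbc.sub hubc)
      · apply ContinuousOn.add
        · apply ContinuousOn.sub
          · exact (h₀c.continuousOn.sub (h₁c.continuousOn.mul hlbc))
          · exact (continuousOn_const.mul (h₂c.max continuous_const).continuousOn).mul hubc
        · exact (continuousOn_const.mul (h₂c.neg.max continuous_const).continuousOn).mul hlbc
    · intro t ht
      have := (hsol t ht).2
      convert this using 1
      ring
  -- ordering
  have hwnn : ∀ t ∈ Set.Ici t₀, 0 ≤ ub t - lb t := by
    apply nonneg_of_ode (c := fun t => max χ 0 * (ub t + lb t) + a₀ t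
      - (a₁ t - κ * max (-(a₂ t)) 0) * (ub t + lb t)) ?_ ?_ (by linarith)
    · apply ContinuousOn.sub
      · exact (continuousOn_const.mul (hubc.add hlbc)).add h₀c.continuousOn
      · exact ((h₁c.continuousOn.sub
          (continuousOn_const.mul (h₂c.neg.max continuous_const).continuousOn))).mul
          (hubc.add hlbc)
    · intro t ht
      have := ((hsol t ht).1).sub ((hsol t ht).2)
      exact this.congr_deriv (by ring)
  have hord : ∀ t ∈ Set.Ici t₀, lb t ≤ ub t := fun t ht => by linarith [hwnn t ht]
  have hubpos : ∀ t ∈ Set.Ici t₀, 0 < ub t :=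
    fun t ht => lt_of_lt_of_le (hlbpos t ht) (hord t ht)
  -- infimum facts
  obtain ⟨Alo, hAlo⟩ := h₁b
  obtain ⟨B2, hB2⟩ := h₂a
  obtain ⟨B2', hB2'⟩ := h₂b
  have habs2 : ∀ t, |a₂ t| ≤ max B2 (-B2') := by
    intro t
    rw [abs_le]
    constructor
    · have := hB2' (Set.mem_range_self t)
      have h2 := le_max_right B2 (-B2')
      linarith
    · exact le_trans (hB2 (Set.mem_range_self t)) (le_max_left _ _)
  have hbddβ : BddBelow (Set.range (fun t => a₁ t - κ * |a₂ t| - 2 * max χ 0)) := by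
    refine ⟨Alo - κ * max B2 (-B2') - 2 * max χ 0, ?_⟩
    rintro y ⟨t, rfl⟩
    have h1 := hAlo (Set.mem_range_self t)
    have h2 := mul_le_mul_of_nonneg_left (habs2 t) hκ.le
    simp only
    linarith
  have hbddγ : BddBelow (Set.range (fun t => a₁ t - κ * |a₂ t|)) := by
    refine ⟨Alo - κ * max B2 (-B2'), ?_⟩
    rintro y ⟨t, rfl⟩
    have h1 := hAlo (Set.mem_range_self t)
    have h2 := mul_le_mul_of_nonneg_left (habs2 t) hκ.le
    simp only
    linarith
  set ι := ⨅ t, (a₁ t - κ * |a₂ t| - 2 * max χ 0) with hι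
  have hι_le : ∀ t, ι ≤ a₁ t - κ * |a₂ t| - 2 * max χ 0 := fun t => ciInf_le hbddβ t
  have hι_pos : 0 < ι := by
    have h1 : (⨅ t, (a₁ t - κ * |a₂ t|)) - 2 * max χ 0 ≤ ι := by
      apply le_ciInf
      intro t
      have := ciInf_le hbddγ t
      linarith
    linarith
  -- part (i): derivative of log ratio
  have hL : ∀ t ∈ Set.Ici t₀,
      HasDerivWithinAt (fun s => Real.log (ub s / lb s))
        (-((a₁ t - κ * |a₂ t| - 2 * max χ 0) * (ub t - lb t))) (Set.Ici t₀) t := by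
    intro t ht
    have hlbne : lb t ≠ 0 := (hlbpos t ht).ne'
    have hubne : ub t ≠ 0 := (hubpos t ht).ne'
    have hdiv := ((hsol t ht).1).div ((hsol t ht).2) hlbne
    have hlog := hdiv.log (div_ne_zero hubne hlbne)
    convert hlog using 1
    · rfl
    simp only [Pi.div_apply]
    field_simp
    rw [← max_zero_add_max_neg_zero_eq_abs_self (a₂ t)]
    ring
  have hL_nonpos : ∀ t ∈ Set.Ici t₀,
      -((a₁ t - κ * |a₂ t| - 2 * max χ 0) * (ub t - lb t)) ≤ 0 := by
    intro t ht
    have h1 : 0 ≤ a₁ t - κ * |a₂ t| - 2 * max χ 0 := le_trans hι_pos.le (hι_le t)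
    have h2 := hwnn t ht
    nlinarith
  have hLanti : AntitoneOn (fun s => Real.log (ub s / lb s)) (Set.Ici t₀) :=
    anti_Ici_helper hL (fun t ht => hL_nonpos t (mem_Ici.2 (le_of_lt (mem_Ioi.1 ht))))
  have hexplog : ∀ t ∈ Set.Ici t₀, Real.exp (Real.log (ub t / lb t)) = ub t / lb t :=
    fun t ht => Real.exp_log (div_pos (hubpos t ht) (hlbpos t ht))
  have hratio_anti : AntitoneOn (fun t => ub t / lb t) (Set.Ici t₀) := by
    intro s hs t ht hst
    have h1 := hLanti hs ht hst
    calc ub t / lb t = Real.exp (Real.log (ub t / lb t)) := (hexplog t ht).symm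
      _ ≤ Real.exp (Real.log (ub s / lb s)) := Real.exp_le_exp.2 h1
      _ = ub s / lb s := hexplog s hs
  have hratio_le : ∀ t ∈ Set.Ici t₀, ub t / lb t ≤ ub t₀ / lb t₀ :=
    fun t ht => hratio_anti (self_mem_Ici) ht ht
  refine ⟨fun t ht => ⟨hL t ht, hL_nonpos t ht⟩, hratio_anti, hratio_le, ?_⟩
  -- part (ii)
  intro hm0
  have hub₀ : 0 < ub t₀ := hubpos t₀ self_mem_Ici
  have hε₀pos : 0 < ε₀ := by
    rw [hε₀]
    exact mul_pos (mul_pos hι_pos hm0) (div_pos hlb₀ hub₀)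
  have hm_le : ∀ t ∈ Set.Ici t₀, m ≤ ub t := by
    intro t ht
    rw [hm]
    exact ciInf_le ⟨0, by rintro y ⟨s, rfl⟩; exact (hubpos s s.2).le⟩ (⟨t, ht⟩ : Set.Ici t₀)
  have hL0 : ∀ t ∈ Set.Ici t₀, 0 ≤ Real.log (ub t / lb t) := by
    intro t ht
    apply Real.log_nonneg
    rw [le_div_iff₀ (hlbpos t ht)]
    simpa using hord t ht
  -- lower bound lb t ≥ m * (lb t₀ / ub t₀)
  have hlb_lower : ∀ t ∈ Set.Ici t₀, m * (lb t₀ / ub t₀) ≤ lb t := by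
    intro t ht
    have h1 := hratio_le t ht
    have h2 : (ub t₀ / lb t₀)⁻¹ ≤ (ub t / lb t)⁻¹ :=
      inv_anti₀ (div_pos (hubpos t ht) (hlbpos t ht)) h1
    rw [inv_div, inv_div] at h2
    have h3 : m * (lb t₀ / ub t₀) ≤ ub t * (lb t / ub t) :=
      mul_le_mul (hm_le t ht) h2 (by positivity) (hubpos t ht).le
    have h4 : ub t * (lb t / ub t) = lb t := by
      rw [mul_comm]
      exact div_mul_cancel₀ (lb t) (hubpos t ht).ne'
    linarith
  -- key: lb t * L t ≤ ub t - lb t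
  have hkey : ∀ t ∈ Set.Ici t₀, lb t * Real.log (ub t / lb t) ≤ ub t - lb t := by
    intro t ht
    have h1 := Real.add_one_le_exp (Real.log (ub t / lb t))
    rw [hexplog t ht] at h1
    have h2 := (le_div_iff₀ (hlbpos t ht)).1 h1
    nlinarith
  -- exponential decay of L
  have hLdecay : ∀ t ∈ Set.Ici t₀, Real.log (ub t / lb t) ≤
      Real.exp (-(ε₀ * (t - t₀))) * Real.log (ub t₀ / lb t₀) := by
    have hEanti : AntitoneOn
        (fun s => Real.log (ub s / lb s) * Real.exp (ε₀ * (s - t₀))) (Set.Ici t₀) := by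
      apply anti_Ici_helper (f' := fun t =>
        (-((a₁ t - κ * |a₂ t| - 2 * max χ 0) * (ub t - lb t))) * Real.exp (ε₀ * (t - t₀)) +
          Real.log (ub t / lb t) * (ε₀ * Real.exp (ε₀ * (t - t₀))))
      · intro t ht
        have hexp : HasDerivAt (fun s => Real.exp (ε₀ * (s - t₀)))
            (ε₀ * Real.exp (ε₀ * (t - t₀))) t := by
          have := (((hasDerivAt_id t).sub_const t₀).const_mul ε₀).exp
          simpa [mul_comm] using this
        exact (hL t ht).mul hexp.hasDerivWithinAt
      · intro t ht'
        have ht : t ∈ Set.Ici t₀ := mem_Ici.2 (le_of_lt (mem_Ioi.1 ht'))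
        have hkey2 : ε₀ * Real.log (ub t / lb t) ≤
            (a₁ t - κ * |a₂ t| - 2 * max χ 0) * (ub t - lb t) := by
          have h1 := hlb_lower t ht
          have h2 := hL0 t ht
          have h3 := hkey t ht
          have h4 := hι_le t
          have h5 := hwnn t ht
          have h6 : ι * (m * (lb t₀ / ub t₀) * Real.log (ub t / lb t)) ≤
              ι * (lb t * Real.log (ub t / lb t)) :=
            mul_le_mul_of_nonneg_left (mul_le_mul_of_nonneg_right h1 h2) hι_pos.le
          have h7 : ι * (lb t * Real.log (ub t / lb t)) ≤ ι * (ub t - lb t) :=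
            mul_le_mul_of_nonneg_left h3 hι_pos.le
          have h8 : ι * (ub t - lb t) ≤
              (a₁ t - κ * |a₂ t| - 2 * max χ 0) * (ub t - lb t) :=
            mul_le_mul_of_nonneg_right h4 h5
          have h9 : ε₀ * Real.log (ub t / lb t) =
              ι * (m * (lb t₀ / ub t₀) * Real.log (ub t / lb t)) := by
            rw [hε₀]; ring
          linarith
        have hep := Real.exp_pos (ε₀ * (t - t₀))
        have h10 : (ε₀ * Real.log (ub t / lb t) -
            (a₁ t - κ * |a₂ t| - 2 * max χ 0) * (ub t - lb t)) ≤ 0 := by linarith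
        have h11 : -((a₁ t - κ * |a₂ t| - 2 * max χ 0) * (ub t - lb t)) *
            Real.exp (ε₀ * (t - t₀)) + Real.log (ub t / lb t) *
            (ε₀ * Real.exp (ε₀ * (t - t₀))) =
            (ε₀ * Real.log (ub t / lb t) -
              (a₁ t - κ * |a₂ t| - 2 * max χ 0) * (ub t - lb t)) *
              Real.exp (ε₀ * (t - t₀)) := by ring
        rw [h11]
        exact mul_nonpos_of_nonpos_of_nonneg h10 hep.le
    intro t ht
    have hE := hEanti self_mem_Ici ht ht
    have h2 : Real.log (ub t / lb t) * Real.exp (ε₀ * (t - t₀)) ≤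
        Real.log (ub t₀ / lb t₀) := by simpa using hE
    have h3 := Real.exp_pos (ε₀ * (t - t₀))
    rw [Real.exp_neg, inv_mul_eq_div, le_div_iff₀ h3]
    linarith
  -- boundedness of ub
  obtain ⟨A₀, hA₀⟩ := h₀a
  set M := max (ub t₀) (A₀ / ι) with hM
  have hMpos : 0 < M := lt_of_lt_of_le hub₀ (le_max_left _ _)
  have hubM : ∀ t ∈ Set.Ici t₀, ub t ≤ M := by
    by_contra hcon
    push_neg at hcon
    obtain ⟨T, hT, hMT⟩ := hcon
    have hub₀M : ub t₀ ≤ M := le_max_left _ _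
    set S : Set ℝ := {t ∈ Set.Icc t₀ T | ub t ≤ M} with hS
    have hSne : S.Nonempty := ⟨t₀, ⟨le_refl _, hT⟩, hub₀M⟩
    have hSbdd : BddAbove S := ⟨T, fun x hx => hx.1.2⟩
    have hSclosed : IsClosed S := by
      have : S = Set.Icc t₀ T ∩ ub ⁻¹' (Set.Iic M) := by
        ext x; simp [hS, Set.mem_setOf_eq, Set.mem_inter_iff]
      rw [this]
      exact (hubc.mono Icc_subset_Ici_self).preimage_isClosed_of_isClosed
        isClosed_Icc isClosed_Iic
    obtain ⟨τ, hτS, hubd⟩ : ∃ τ, τ ∈ S ∧ ∀ x ∈ S, x ≤ τ :=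
      ⟨sSup S, hSclosed.csSup_mem hSne hSbdd, fun x hx => le_csSup hSbdd hx⟩
    have hτIcc : τ ∈ Set.Icc t₀ T := hτS.1
    have hτT : τ < T := lt_of_le_of_ne hτIcc.2
      (by intro h; rw [h] at hτS; exact absurd hτS.2 (not_le.2 hMT))
    have hgt : ∀ s ∈ Set.Ioc τ T, M < ub s := by
      intro s hs
      by_contra h
      push_neg at h
      exact absurd (hubd s ⟨⟨le_trans hτIcc.1 hs.1.le, hs.2⟩, h⟩) (not_le.2 hs.1)
    have hAM : A₀ ≤ M * ι := (div_le_iff₀ hι_pos).1 (le_max_right _ _)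
    have hanti : AntitoneOn ub (Set.Icc τ T) := by
      apply anti_Icc_helper (f' := fun x => max χ 0 * ub x * (ub x - lb x) +
        ub x * (a₀ x - a₁ x * ub x - κ * max (a₂ x) 0 * lb x + κ * max (-(a₂ x)) 0 * ub x))
      · exact hubc.mono (fun x hx => le_trans hτIcc.1 hx.1)
      · intro x hx
        have hx0 : t₀ < x := lt_of_le_of_lt hτIcc.1 hx.1
        exact ((hsol x hx0.le).1).hasDerivAt (Ici_mem_nhds hx0)
      · intro x hx
        have hxI : x ∈ Set.Ici t₀ := (lt_of_le_of_lt hτIcc.1 hx.1).le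
        have hu := hubpos x hxI
        have hl := hlbpos x hxI
        have hMx : M < ub x := hgt x ⟨hx.1, hx.2.le⟩
        have ha₀x : a₀ x ≤ A₀ := hA₀ (Set.mem_range_self x)
        have hβx := hι_le x
        have habsx : |a₂ x| = max (a₂ x) 0 + max (-(a₂ x)) 0 :=
          (max_zero_add_max_neg_zero_eq_abs_self _).symm
        rw [habsx] at hβx
        have hP : (0:ℝ) ≤ max (a₂ x) 0 := le_max_right _ _
        have hN : (0:ℝ) ≤ max (-(a₂ x)) 0 := le_max_right _ _
        have h11 : (ι + 2 * max χ 0 + κ * (max (a₂ x) 0 + max (-(a₂ x)) 0)) * ub x ≤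
            a₁ x * ub x :=
          mul_le_mul_of_nonneg_right (by linarith) hu.le
        have e1 : 0 ≤ max χ 0 * ub x * ub x := by positivity
        have e2 : 0 ≤ max χ 0 * ub x * lb x := by positivity
        have e3 : 0 ≤ κ * max (a₂ x) 0 * ub x * ub x := by positivity
        have e4 : 0 ≤ κ * max (a₂ x) 0 * lb x * ub x := by positivity
        have e5 : ub x * A₀ ≤ ub x * (M * ι) := mul_le_mul_of_nonneg_left hAM hu.le
        have e6 : M * ι * ub x < ub x * ι * ub x := by
          have := mul_lt_mul_of_pos_right (mul_lt_mul_of_pos_right hMx hι_pos) hu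
          linarith [this]
        nlinarith [mul_le_mul_of_nonneg_left ha₀x hu.le]
    have h12 : ub T ≤ ub τ :=
      hanti ⟨le_refl τ, hτT.le⟩ ⟨hτT.le, le_refl T⟩ hτT.le
    linarith [hτS.2]
  refine ⟨hε₀pos, fun t ht => ⟨hL0 t ht, hLdecay t ht⟩, ?_⟩
  -- tendsto
  have hdecay0 : Filter.Tendsto (fun t => Real.exp (-(ε₀ * (t - t₀)))) Filter.atTop (nhds 0) := by
    apply Real.tendsto_exp_atBot.comp
    apply Filter.Tendsto.comp tendsto_neg_atTop_atBot
    have h1 : Filter.Tendsto (fun t : ℝ => t - t₀) Filter.atTop Filter.atTop :=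
      tendsto_atTop_add_const_right _ (-t₀) Filter.tendsto_id
    exact h1.const_mul_atTop hε₀pos
  have hupper : Filter.Tendsto
      (fun t => M * (Real.exp (-(ε₀ * (t - t₀))) * Real.log (ub t₀ / lb t₀)))
      Filter.atTop (nhds 0) := by
    have := (hdecay0.mul_const (Real.log (ub t₀ / lb t₀))).const_mul M
    simpa using this
  apply tendsto_of_tendsto_of_tendsto_of_le_of_le' tendsto_const_nhds hupper
  · filter_upwards [Filter.eventually_ge_atTop t₀] with t ht
    exact hwnn t ht
  · filter_upwards [Filter.eventually_ge_atTop t₀] with t ht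
    -- ub t - lb t ≤ ub t * L t ≤ M * L t ≤ M * (exp * L₀)
    have hLt := hL0 t ht
    have h1 := Real.add_one_le_exp (-(Real.log (ub t / lb t)))
    rw [Real.exp_neg, hexplog t ht, inv_div] at h1
    have h2 := (le_div_iff₀ (hubpos t ht)).1 h1
    have h3 : ub t - lb t ≤ ub t * Real.log (ub t / lb t) := by nlinarith
    have h4 : ub t * Real.log (ub t / lb t) ≤ M * Real.log (ub t / lb t) :=
      mul_le_mul_of_nonneg_right (hubM t ht) hLt
    have h5 := mul_le_mul_of_nonneg_left (hLdecay t ht) hMpos.le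
    linarith

/-- under `inf_t {a₁(t) − κ|a₂(t)|} > 2(χ)₊`, for a solution `(ū, u̲)` of the
comparison ODE system with `0 < u̲(t₀) ≤ ū(t₀)`:
(i) `ln(ū/u̲)` has derivative `−(a₁(t) − κ|a₂(t)| − 2(χ)₊)(ū(t) − u̲(t)) ≤ 0`, so `ū/u̲` is
nonincreasing and bounded by its initial value;
(ii) if `m = inf_{t ≥ t₀} ū(t) > 0` then, with
`ε₀ = (inf_t {a₁(t) − κ|a₂(t)| − 2(χ)₊}) · m · u̲(t₀)/ū(t₀) > 0`,
`0 ≤ ln(ū(t)/u̲(t)) ≤ e^{−ε₀(t − t₀)} ln(ū(t₀)/u̲(t₀))` for all `t ≥ t₀`, and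
`ū(t) − u̲(t) → 0` as `t → ∞`. -/
theorem comparison_system_contraction_of_ratio
    (χ κ : ℝ) (hκ : 0 < κ)
    (a₀ a₁ a₂ : ℝ → ℝ)
    (h₀ : ContBdd a₀) (h₁ : ContBdd a₁) (h₂ : ContBdd a₂)
    (h₀pos : 0 < ⨅ t, a₀ t) (h₁nonneg : ∀ t, 0 ≤ a₁ t)
    (hcond : 2 * max χ 0 < ⨅ t, (a₁ t - κ * |a₂ t|))
    (t₀ : ℝ) (ub lb : ℝ → ℝ)
    (hsol : CompODESystemOn χ κ a₀ a₁ a₂ t₀ ub lb)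
    (hlb₀ : 0 < lb t₀) (hord₀ : lb t₀ ≤ ub t₀)
    (m ε₀ : ℝ) (hm : m = ⨅ t : Set.Ici t₀, ub ↑t)
    (hε₀ : ε₀ = (⨅ t, (a₁ t - κ * |a₂ t| - 2 * max χ 0)) * m * (lb t₀ / ub t₀)) :
    (∀ t ∈ Set.Ici t₀,
      HasDerivWithinAt (fun s => Real.log (ub s / lb s))
        (-((a₁ t - κ * |a₂ t| - 2 * max χ 0) * (ub t - lb t))) (Set.Ici t₀) t ∧
      -((a₁ t - κ * |a₂ t| - 2 * max χ 0) * (ub t - lb t)) ≤ 0) ∧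
    AntitoneOn (fun t => ub t / lb t) (Set.Ici t₀) ∧
    (∀ t ∈ Set.Ici t₀, ub t / lb t ≤ ub t₀ / lb t₀) ∧
    (0 < m →
      0 < ε₀ ∧
      (∀ t ∈ Set.Ici t₀,
        0 ≤ Real.log (ub t / lb t) ∧
        Real.log (ub t / lb t) ≤ Real.exp (-(ε₀ * (t - t₀))) * Real.log (ub t₀ / lb t₀)) ∧
      Filter.Tendsto (fun t => ub t - lb t) Filter.atTop (nhds 0)) :=
  main χ κ hκ a₀ a₁ a₂ h₀.1 h₁.1 h₂.1 h₀.2.1 h₁.2.2 h₂.2.1 h₂.2.2 hcond t₀ ub lb hsol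
    hlb₀ hord₀ m ε₀ hm hε₀
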